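/- Let A : [t₀,t₁] → ℝ^{m×n} be differentiable with A(t) of rank r for all t and factorization A(t) = U(t)S(t)V(t)ᵀ, and assume U(t₁)ᵀU(t₀) and V(t₁)ᵀV(t₀) are invertible. Let Y₀ = A(t₀) = U₀S₀V₀ᵀ. Define K(t₁) = A(t₁)V₀ with QR factorization K(t₁) = U₁R₁, L(t₁) = A(t₁)ᵀU₀ with QR factorization L(t₁) = V₁R̃₁, and S₁ = U₁ᵀ A(t₁) V₁. Then U₁ S₁ V₁ᵀ = A(t₁). -/
import Mathlib
open Matrix

lemma aux_proj {m r : ℕ} (Q W : Matrix (Fin m) (Fin r) ℝ) (M N : Matrix (Fin r) (Fin r) ℝ)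
    (hQ : Qᵀ * Q = 1) (hW : Wᵀ * W = 1) (hM : Invertible M) (hE : Q * M = W * N) :
    W * Wᵀ * Q = Q := by
  have hMfac : M = (Qᵀ * W) * N := by
    calc M = (Qᵀ * Q) * M := by rw [hQ, one_mul]
    _ = Qᵀ * (Q * M) := by rw [Matrix.mul_assoc]
    _ = (Qᵀ * W) * N := by rw [hE, Matrix.mul_assoc]
  have hdet : IsUnit M.det := (Matrix.isUnit_iff_isUnit_det M).mp (isUnit_of_invertible M)
  have hNdet : IsUnit N.det := by
    rw [hMfac, Matrix.det_mul] at hdet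
    exact isUnit_of_mul_isUnit_right hdet
  have hN : Invertible N := N.invertibleOfIsUnitDet hNdet
  have hWQ : W = Q * (M * ⅟N) := by
    calc W = W * (N * ⅟N) := by rw [mul_invOf_self, Matrix.mul_one]
    _ = (W * N) * ⅟N := by rw [Matrix.mul_assoc]
    _ = Q * (M * ⅟N) := by rw [← hE, Matrix.mul_assoc]
  set P := M * ⅟N with hP
  have hPP : Pᵀ * P = 1 := by
    have := hW
    rw [hWQ] at this
    rwa [Matrix.transpose_mul, Matrix.mul_assoc, ← Matrix.mul_assoc Qᵀ, hQ, one_mul] at this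
  have hPP' : P * Pᵀ = 1 := mul_eq_one_comm.mp hPP
  calc W * Wᵀ * Q = (Q * P) * (Q * P)ᵀ * Q := by rw [← hWQ]
  _ = Q * (P * Pᵀ) * (Qᵀ * Q) := by
      rw [Matrix.transpose_mul]
      simp only [Matrix.mul_assoc]
  _ = Q := by rw [hPP', hQ, Matrix.mul_one, Matrix.mul_one]

attribute [local instance] Matrix.frobeniusNormedAddCommGroup Matrix.frobeniusNormedSpace

/-- Exactness of the new low-rank matrix integrator. -/
theorem stmt3 {m n r : ℕ} (t₀ t₁ : ℝ) (ht : t₀ ≤ t₁)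
    (A : ℝ → Matrix (Fin m) (Fin n) ℝ)
    (hdiff : ∀ t ∈ Set.Icc t₀ t₁, DifferentiableAt ℝ A t)
    (U : ℝ → Matrix (Fin m) (Fin r) ℝ)
    (S : ℝ → Matrix (Fin r) (Fin r) ℝ)
    (V : ℝ → Matrix (Fin n) (Fin r) ℝ)
    (hfac : ∀ t ∈ Set.Icc t₀ t₁, A t = U t * S t * (V t)ᵀ)
    (hU : ∀ t ∈ Set.Icc t₀ t₁, (U t)ᵀ * U t = 1)
    (hV : ∀ t ∈ Set.Icc t₀ t₁, (V t)ᵀ * V t = 1)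
    (hS : ∀ t ∈ Set.Icc t₀ t₁, Invertible (S t))
    (hrank : ∀ t ∈ Set.Icc t₀ t₁, (A t).rank = r)
    (hUinv : Invertible ((U t₁)ᵀ * U t₀))
    (hVinv : Invertible ((V t₁)ᵀ * V t₀))
    -- initial value Y₀ = A(t₀) = U₀ S₀ V₀ᵀ
    (Y₀ : Matrix (Fin m) (Fin n) ℝ) (hY₀ : Y₀ = A t₀)
    -- QR factorization of K(t₁) = A(t₁) V₀
    (U₁ : Matrix (Fin m) (Fin r) ℝ) (R₁ : Matrix (Fin r) (Fin r) ℝ)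
    (hQR_K : A t₁ * V t₀ = U₁ * R₁) (hU₁ : U₁ᵀ * U₁ = 1)
    -- QR factorization of L(t₁) = A(t₁)ᵀ U₀
    (V₁ : Matrix (Fin n) (Fin r) ℝ) (R₁' : Matrix (Fin r) (Fin r) ℝ)
    (hQR_L : (A t₁)ᵀ * U t₀ = V₁ * R₁') (hV₁ : V₁ᵀ * V₁ = 1)
    -- S-step result
    (S₁ : Matrix (Fin r) (Fin r) ℝ) (hS₁ : S₁ = U₁ᵀ * A t₁ * V₁) :
    U₁ * S₁ * V₁ᵀ = A t₁ := by
  have ht1 : t₁ ∈ Set.Icc t₀ t₁ := ⟨ht, le_refl t₁⟩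
  have hA : A t₁ = U t₁ * S t₁ * (V t₁)ᵀ := hfac t₁ ht1
  haveI hSt1 : Invertible (S t₁) := hS t₁ ht1
  haveI := hUinv
  haveI := hVinv
  haveI hMinv : Invertible (S t₁ * ((V t₁)ᵀ * V t₀)) := invertibleMul _ _
  haveI hStinv : Invertible ((S t₁)ᵀ) := by infer_instance
  haveI hM'inv : Invertible ((S t₁)ᵀ * ((U t₁)ᵀ * U t₀)) := invertibleMul _ _
  have hEK : U t₁ * (S t₁ * ((V t₁)ᵀ * V t₀)) = U₁ * R₁ := by
    rw [← hQR_K, hA]; simp only [Matrix.mul_assoc]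
  have hEL : V t₁ * ((S t₁)ᵀ * ((U t₁)ᵀ * U t₀)) = V₁ * R₁' := by
    rw [← hQR_L, hA]; simp only [Matrix.transpose_mul, Matrix.transpose_transpose,
      Matrix.mul_assoc]
  have hU₁proj : U₁ * U₁ᵀ * U t₁ = U t₁ :=
    aux_proj (U t₁) U₁ _ R₁ (hU t₁ ht1) hU₁ hMinv hEK
  have hV₁proj : V₁ * V₁ᵀ * V t₁ = V t₁ :=
    aux_proj (V t₁) V₁ _ R₁' (hV t₁ ht1) hV₁ hM'inv hEL
  have step1 : A t₁ * (V₁ * V₁ᵀ) = A t₁ := by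
    rw [hA]
    calc U t₁ * S t₁ * (V t₁)ᵀ * (V₁ * V₁ᵀ) = U t₁ * S t₁ * (V₁ * V₁ᵀ * V t₁)ᵀ := by
          simp only [Matrix.transpose_mul, Matrix.transpose_transpose, Matrix.mul_assoc]
    _ = U t₁ * S t₁ * (V t₁)ᵀ := by rw [hV₁proj]
  have step2 : U₁ * U₁ᵀ * A t₁ = A t₁ := by
    rw [hA]
    calc U₁ * U₁ᵀ * (U t₁ * S t₁ * (V t₁)ᵀ) = U₁ * U₁ᵀ * U t₁ * S t₁ * (V t₁)ᵀ := by
          simp only [Matrix.mul_assoc]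
    _ = U t₁ * S t₁ * (V t₁)ᵀ := by rw [hU₁proj]
  calc U₁ * S₁ * V₁ᵀ = U₁ * U₁ᵀ * (A t₁ * (V₁ * V₁ᵀ)) := by
        rw [hS₁]; simp only [Matrix.mul_assoc]
  _ = A t₁ := by rw [step1, step2]
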